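/- Let q be an odd prime power and ω a non-square in F_q. Consider unknowns α,β,γ,δ ∈ F_q with αδ - βγ ≠ 0 satisfying 4ωαγ = 2αβ + βδ and β^2 = 4ω(α^2 - αδ - βγ). Then up to a nonzero scalar, the solutions are exactly: α = ξ^2 + 4ω, β = (4ω+ξ^2)ξ, γ = ξ(-ξ^2+12ω)/(4ω), δ = 4ω - 3ξ^2 for ξ ∈ F_q, together with the exceptional solution α = δ = 0, β = 1, γ = -(4ω)^{-1}. -/

import Mathlib

/-- For `ω` a non-square in `F_q` and `α,β,γ,δ ∈ F_q` with `αδ - βγ ≠ 0`, the system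
`4ωαγ = 2αβ + βδ`, `β² = 4ω(α² - αδ - βγ)` holds if and only if, up to a nonzero
scalar, `(α,β,γ,δ)` is of the form
`(ξ²+4ω, (4ω+ξ²)ξ, ξ(-ξ²+12ω)/(4ω), 4ω-3ξ²)` for some `ξ ∈ F_q`, or is the
exceptional solution `(0, 1, -(4ω)⁻¹, 0)`. -/
theorem parametrization_of_solutions (q : ℕ) (hq : IsPrimePow q) (hodd : Odd q)
    (F : Type*) [Field F] [Fintype F] (hF : Fintype.card F = q)
    (ω : F) (hω : ¬ IsSquare ω)
    (α β γ δ : F) (hdet : α * δ - β * γ ≠ 0) :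
    (4 * ω * α * γ = 2 * α * β + β * δ ∧
        β ^ 2 = 4 * ω * (α ^ 2 - α * δ - β * γ)) ↔
      ((∃ c : F, c ≠ 0 ∧ ∃ ξ : F,
          α = c * (ξ ^ 2 + 4 * ω) ∧
          β = c * ((4 * ω + ξ ^ 2) * ξ) ∧
          γ = c * (ξ * (-ξ ^ 2 + 12 * ω) / (4 * ω)) ∧
          δ = c * (4 * ω - 3 * ξ ^ 2)) ∨
       (∃ c : F, c ≠ 0 ∧ α = 0 ∧ β = c ∧ γ = c * (-(4 * ω)⁻¹) ∧ δ = 0)) := by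
  have hchar : ringChar F ≠ 2 := by
    intro h
    have := FiniteField.even_card_of_char_two h
    rw [hF] at this
    obtain ⟨k, rfl⟩ := hodd
    omega
  have h2 : (2 : F) ≠ 0 := by
    intro h
    exact hchar (ringChar.eq_iff.mpr (CharP.charP_iff_prime_eq_zero Nat.prime_two |>.mpr h))
  have hω0 : ω ≠ 0 := by rintro rfl; exact hω (by simp)
  have h4ω : (4 : F) * ω ≠ 0 := by
    have h4 : (4 : F) ≠ 0 := by
      intro h
      apply h2
      have : (2 : F) * 2 = 0 := by rw [← h]; norm_num
      rcases mul_eq_zero.mp this with h | h <;> exact h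
    exact mul_ne_zero h4 hω0
  have h4 : (4 : F) ≠ 0 := left_ne_zero_of_mul h4ω
  constructor
  · rintro ⟨e1, e2⟩
    by_cases hα : α = 0
    · right
      subst hα
      have hβ : β ≠ 0 := by
        intro h; apply hdet; rw [h]; ring
      have hδ : δ = 0 := by
        have : β * δ = 0 := by linear_combination -e1
        rcases mul_eq_zero.mp this with h | h
        · exact absurd h hβ
        · exact h
      refine ⟨β, hβ, rfl, rfl, ?_, hδ⟩
      have hb : β * β = β * (-(4 * ω) * γ) := by linear_combination e2
      have hb2 := mul_left_cancel₀ hβ hb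
      rw [hb2]
      field_simp
    · left
      have hδeq : δ * (β ^ 2 + 4 * ω * α ^ 2) = α * (4 * ω * α ^ 2 - 3 * β ^ 2) := by
        linear_combination α * e2 - β * e1
      have hkey : β ^ 2 + 4 * ω * α ^ 2 ≠ 0 := by
        intro h
        have hβ2 : β ^ 2 = -(4 * ω * α ^ 2) := by linear_combination h
        have : α * (16 * ω * α ^ 2) = 0 := by
          linear_combination (δ + 3 * α) * h - hδeq
        rcases mul_eq_zero.mp this with h' | h'
        · exact hα h'
        · have h16 : (16 : F) ≠ 0 := by
            intro h16
            apply h2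
            have : (2 : F) ^ 4 = 0 := by rw [← h16]; norm_num
            exact pow_eq_zero_iff (by norm_num) |>.mp this
          have := mul_eq_zero.mp h'
          rcases this with h'' | h''
          · rcases mul_eq_zero.mp h'' with h3 | h3
            · exact h16 h3
            · exact hω0 h3
          · exact hα (pow_eq_zero_iff (by norm_num) |>.mp h'')
      have hkey' : β ^ 2 + α ^ 2 * 4 * ω ≠ 0 := by intro h; apply hkey; linear_combination h
      refine ⟨α ^ 3 / (β ^ 2 + 4 * ω * α ^ 2), ?_, β / α, ?_, ?_, ?_, ?_⟩
      · exact div_ne_zero (pow_ne_zero 3 hα) hkey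
      · field_simp
      · field_simp
        ring
      · rw [div_mul_eq_mul_div, eq_div_iff hkey]
        field_simp
        refine mul_left_cancel₀ hα ?_
        linear_combination (β^2 + 4*ω*α^2) * e1 + β * hδeq
      · field_simp
        linear_combination hδeq
  · rintro (⟨c, hc, ξ, hα, hβ, hγ, hδ⟩ | ⟨c, hc, hα, hβ, hγ, hδ⟩) <;>
      subst hα hβ hγ hδ <;> constructor <;> field_simp <;> ring
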